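/- Let Σ be a locally finite abstract simplicial complex and X a topological space. A map g : |Σ| → X is continuous if and only if for every simplex Δ ∈ Σ the restriction of g to |Δ| is continuous. -/

import Mathlib

/-- `K` is an abstract simplicial complex on the vertex type `V`: a set of nonempty
finite subsets of `V` closed under passing to nonempty subsets. -/
def IsSimplicialComplex {V : Type*} (K : Set (Finset V)) : Prop :=
  ∀ S ∈ K, S.Nonempty ∧ ∀ E : Finset V, E ⊆ S → E.Nonempty → E ∈ K

/-- `K` is locally finite: every vertex belongs to only finitely many simplexes. -/
def IsLocallyFiniteComplex {V : Type*} (K : Set (Finset V)) : Prop :=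
  ∀ v : V, {S ∈ K | v ∈ S}.Finite

/-- The geometric realization `|K|` of an abstract simplicial complex `K`: the set of
functions `f : V → ℝ` which are nonnegative, whose support is (the coercion of) a
simplex of `K`, and whose values sum to `1`.  As a subtype of `V → ℝ` it carries the
topology of pointwise convergence. -/
def Realization {V : Type*} (K : Set (Finset V)) : Set (V → ℝ) :=
  {f | (∀ v, 0 ≤ f v) ∧ (∃ S ∈ K, Function.support f = ↑S) ∧ ∑ᶠ v, f v = 1}

/-- Continuity within a finite union of sets at a point follows from continuity
within each set. -/
lemma continuousWithinAt_biUnion_of_finite {α β ι : Type*} [TopologicalSpace α]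
    [TopologicalSpace β] {g : α → β} {x : α} {T : Set ι} (hT : T.Finite)
    {A : ι → Set α} (h : ∀ i ∈ T, ContinuousWithinAt g (A i) x) :
    ContinuousWithinAt g (⋃ i ∈ T, A i) x := by
  refine Set.Finite.induction_on
    (motive := fun T _ => (∀ i ∈ T, ContinuousWithinAt g (A i) x) →
      ContinuousWithinAt g (⋃ i ∈ T, A i) x) T hT ?_ ?_ h
  · intro _
    simp only [Set.mem_empty_iff_false, Set.iUnion_of_empty, Set.iUnion_empty]
    unfold ContinuousWithinAt
    rw [nhdsWithin_empty]
    exact Filter.tendsto_bot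
  · intro a s _ _ ih h'
    rw [Set.biUnion_insert]
    exact (h' a (Set.mem_insert a s)).union
      (ih fun i hi => h' i (Set.mem_insert_of_mem a hi))

/-- For a locally finite abstract simplicial complex `K` and a topological space `X`,
a map `g : |K| → X` is continuous if and only if its restriction to the subspace
`|Δ| = {f ∈ |K| : support f ⊆ Δ}` is continuous for every simplex `Δ ∈ K`.
(Continuity of the restriction to a subspace is expressed via `ContinuousOn`.) -/
theorem realization_continuous_iff_continuousOn_simplexes {V : Type*}
    (K : Set (Finset V)) (hK : IsSimplicialComplex K) (hlf : IsLocallyFiniteComplex K)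
    {X : Type*} [TopologicalSpace X] (g : (V → ℝ) → X) :
    ContinuousOn g (Realization K) ↔
      ∀ Δ ∈ K, ContinuousOn g {f ∈ Realization K | Function.support f ⊆ ↑Δ} := by
  constructor
  · intro h Δ _
    exact h.mono fun f hf => hf.1
  · intro h x hx
    obtain ⟨hx0, ⟨S, hS, hsupp⟩, hxsum⟩ := hx
    obtain ⟨v, hv⟩ := (hK S hS).1
    have hxv : 0 < x v := by
      have hne : x v ≠ 0 := by
        have : v ∈ Function.support x := by
          rw [hsupp]; exact_mod_cast hv
        exact this
      exact lt_of_le_of_ne (hx0 v) (Ne.symm hne)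
    set U : Set (V → ℝ) := {f | 0 < f v} with hU
    have hUopen : IsOpen U := isOpen_lt continuous_const (continuous_apply v)
    have hUx : U ∈ nhds x := hUopen.mem_nhds hxv
    set A : Finset V → Set (V → ℝ) :=
      fun Δ => {f ∈ Realization K | Function.support f ⊆ ↑Δ} with hA
    set T : Set (Finset V) := {S ∈ K | v ∈ S} with hT
    have hTfin : T.Finite := hlf v
    have hsub : Realization K ∩ U ⊆ ⋃ Δ ∈ T, A Δ := by
      rintro f ⟨⟨hf0, ⟨Δ, hΔ, hΔsupp⟩, hfsum⟩, hfv⟩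
      have hvΔ : v ∈ Δ := by
        have : v ∈ Function.support f := ne_of_gt hfv
        rw [hΔsupp] at this
        exact_mod_cast this
      exact Set.mem_biUnion ⟨hΔ, hvΔ⟩
        ⟨⟨hf0, ⟨Δ, hΔ, hΔsupp⟩, hfsum⟩, hΔsupp.le⟩
    have hcwa : ∀ Δ ∈ T, ContinuousWithinAt g (A Δ) x := by
      intro Δ hΔ
      by_cases hxA : x ∈ A Δ
      · exact h Δ hΔ.1 x hxA
      · apply continuousWithinAt_of_notMem_closure
        intro hcl
        apply hxA
        have hclosed : IsClosed {f : V → ℝ | Function.support f ⊆ ↑Δ} := by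
          have heq : {f : V → ℝ | Function.support f ⊆ ↑Δ}
              = ⋂ u ∈ ((↑Δ : Set V)ᶜ), {f : V → ℝ | f u = 0} := by
            ext f
            simp only [Function.support_subset_iff, Set.mem_iInter,
              Set.mem_compl_iff, Finset.mem_coe, Set.mem_setOf_eq]
            exact ⟨fun hs i hi => by_contra fun h0 => hi (hs i h0),
              fun hz u hu => by_contra fun hn => hu (hz u hn)⟩
          rw [heq]
          exact isClosed_biInter fun u _ =>
            isClosed_eq (continuous_apply u) continuous_const
        have hsx : Function.support x ⊆ ↑Δ :=
          hclosed.closure_subset ((closure_mono (fun f hf => hf.2)) hcl)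
        exact ⟨⟨hx0, ⟨S, hS, hsupp⟩, hxsum⟩, hsx⟩
    have hunion : ContinuousWithinAt g (⋃ Δ ∈ T, A Δ) x :=
      continuousWithinAt_biUnion_of_finite hTfin hcwa
    exact (continuousWithinAt_inter hUx).mp (hunion.mono hsub)
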